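/- Let p ≥ 2, λ₁, λ₂ > 0, σ > 0 and β ∈ ℝᵖ. Then the integral over (τ², w²) ∈ (0,∞)ᵖ × (0,∞)^{p−1} of (2πσ²)^{−p/2} · det(Σ⁻¹_{τ,w})^{1/2} · exp(−βᵀΣ⁻¹_{τ,w}β/(2σ²)) · det(Σ⁻¹_{τ,w})^{−1/2} · (∏_{i=1}^p (τ²ᵢ)^{−1/2} exp(−λ₁² τ²ᵢ/2)) · (∏_{i=1}^{p−1} (w²ᵢ)^{−1/2} exp(−λ₂² w²ᵢ/2)) equals (2πσ²)^{−p/2} · (√(2π)/λ₁)^p · (√(2π)/λ₂)^{p−1} · exp(−(λ₁/σ)∑_{i=1}^p |βᵢ| − (λ₂/σ)∑_{i=1}^{p−1} |β_{i+1} − βᵢ|). Consequently, the marginal prior density of β given σ² in the Bayesian fused lasso model is proportional to exp(−(λ₁/σ)∑|βᵢ| − (λ₂/σ)∑|β_{i+1} − βᵢ|). -/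

import Mathlib

open Matrix MeasureTheory Real

section Aux
open Set

lemma glasser_image {r s : ℝ} (hr : 0 < r) (hs : 0 < s) :
    (fun x => r*x - s/x) '' (Ioi 0) = univ := by
  ext v
  simp only [mem_image, mem_univ, iff_true]
  set D := Real.sqrt (v^2 + 4*r*s) with hD
  have hD2 : D^2 = v^2 + 4*r*s := Real.sq_sqrt (by nlinarith)
  have hDpos : |v| < D := by
    have h0 : 0 ≤ D := Real.sqrt_nonneg _
    nlinarith [sq_abs v, abs_nonneg v]
  have hvD : -v < D := lt_of_le_of_lt (neg_le_abs v) hDpos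
  have hx : 0 < (v + D) / (2*r) := div_pos (by linarith) (by linarith)
  refine ⟨(v + D) / (2*r), hx, ?_⟩
  have hne : v + D ≠ 0 := ne_of_gt (by linarith : (0:ℝ) < v + D)
  show r * ((v + D) / (2*r)) - s/((v + D) / (2*r)) = v
  field_simp
  nlinarith [hD2, sq_nonneg (v + D)]

lemma glasser_inj {r s : ℝ} (hr : 0 < r) (hs : 0 < s) :
    InjOn (fun x => r*x - s/x) (Ioi 0) := by
  apply StrictMonoOn.injOn
  intro x hx y hy hxy
  simp only [mem_Ioi] at hx hy
  have h1 : s / y < s / x := div_lt_div_of_pos_left hs hx hxy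
  have h2 : r * x < r * y := by nlinarith
  simp only
  linarith

lemma glasser_deriv {r s : ℝ} :
    ∀ x ∈ Ioi (0:ℝ), HasDerivWithinAt (fun x => r*x - s/x) (r + s/x^2) (Ioi 0) x := by
  intro x hx
  simp only [mem_Ioi] at hx
  have ha : HasDerivAt (fun y : ℝ => r * y) r x := by
    simpa using (hasDerivAt_id x).const_mul r
  have hb : HasDerivAt (fun y : ℝ => s / y) (s * -(x^2)⁻¹) x := by
    simpa only [div_eq_mul_inv] using (hasDerivAt_inv hx.ne').const_mul s
  have h3 := ha.sub hb
  have he : r - s * -(x^2)⁻¹ = r + s/x^2 := by field_simp; ring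
  rw [he] at h3
  exact h3.hasDerivWithinAt

/-- The Glasser-type integral `∫_0^∞ exp(-(rx - s/x)²) dx = √π/(2r)`. -/
lemma glasser {r s : ℝ} (hr : 0 < r) (hs : 0 < s) :
    ∫ x in Ioi (0:ℝ), Real.exp (-(r*x - s/x)^2) = Real.sqrt π / (2*r) := by
  set f : ℝ → ℝ := fun x => r*x - s/x with hf
  set g : ℝ → ℝ := fun v => Real.exp (-v^2) with hg
  have key : ∫ v, g v = ∫ x in Ioi (0:ℝ), |r + s/x^2| * g (f x) := by
    have := integral_image_eq_integral_abs_deriv_smul measurableSet_Ioi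
      (glasser_deriv (r := r) (s := s)) (glasser_inj hr hs) g
    rw [glasser_image hr hs] at this
    simpa [smul_eq_mul] using this
  have hgauss : ∫ v, g v = Real.sqrt π := by
    simpa using integral_gaussian 1
  have habs : ∀ x ∈ Ioi (0:ℝ), |r + s/x^2| * g (f x) = (r + s/x^2) * g (f x) := by
    intro x hx
    simp only [mem_Ioi] at hx
    rw [abs_of_pos (by positivity)]
  have hint : IntegrableOn (fun x => |r + s/x^2| * g (f x)) (Ioi (0:ℝ)) := by
    have := (integrableOn_image_iff_integrableOn_abs_deriv_smul measurableSet_Ioi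
      (glasser_deriv (r := r) (s := s)) (glasser_inj hr hs) g).mp ?_
    · simpa [smul_eq_mul] using this
    · rw [glasser_image hr hs, integrableOn_univ]
      simpa using integrable_exp_neg_mul_sq (one_pos)
  have hint' : IntegrableOn (fun x => (r + s/x^2) * g (f x)) (Ioi (0:ℝ)) :=
    hint.congr_fun habs measurableSet_Ioi
  have hmeas1 : AEStronglyMeasurable (fun x : ℝ => r * g (f x)) (volume.restrict (Ioi 0)) := by
    apply Measurable.aestronglyMeasurable
    fun_prop
  have hbound : ∀ x ∈ Ioi (0:ℝ), ‖r * g (f x)‖ ≤ (r + s/x^2) * g (f x) := by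
    intro x hx
    simp only [mem_Ioi] at hx
    rw [Real.norm_eq_abs, abs_of_pos (by positivity : (0:ℝ) < r * g (f x))]
    have hgp : 0 < g (f x) := Real.exp_pos _
    nlinarith [div_pos hs (pow_pos hx 2)]
  have h1 : IntegrableOn (fun x => r * g (f x)) (Ioi (0:ℝ)) := by
    apply Integrable.mono hint' hmeas1
    refine (ae_restrict_iff' measurableSet_Ioi).mpr (Filter.Eventually.of_forall ?_)
    intro x hx
    refine (hbound x hx).trans ?_
    rw [Real.norm_eq_abs]
    exact le_abs_self _
  have h2 : IntegrableOn (fun x => (s/x^2) * g (f x)) (Ioi (0:ℝ)) := by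
    have he : (fun x => (s/x^2) * g (f x)) = fun x => (r + s/x^2) * g (f x) - r * g (f x) := by
      funext x; ring
    rw [he]
    exact hint'.sub h1
  have himg2 : (fun x : ℝ => s/(r*x)) '' (Ioi 0) = Ioi 0 := by
    ext v
    simp only [mem_image, mem_Ioi]
    constructor
    · rintro ⟨y, hy, rfl⟩; positivity
    · intro hv; exact ⟨s/(r*v), by positivity, by field_simp⟩
  have hinj2 : InjOn (fun x : ℝ => s/(r*x)) (Ioi 0) := by
    intro x hx y hy hxy
    simp only [mem_Ioi] at hx hy
    simp only at hxy
    have hx' : r*x ≠ 0 := by positivity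
    have hy' : r*y ≠ 0 := by positivity
    rw [div_eq_div_iff hx' hy'] at hxy
    have h := mul_left_cancel₀ hs.ne' hxy
    have := mul_left_cancel₀ hr.ne' h
    exact this.symm
  have hderiv2 : ∀ x ∈ Ioi (0:ℝ),
      HasDerivWithinAt (fun x : ℝ => s/(r*x)) (s/r * -(x^2)⁻¹) (Ioi 0) x := by
    intro x hx
    simp only [mem_Ioi] at hx
    have hb : HasDerivAt (fun y : ℝ => s/r * y⁻¹) (s/r * -(x^2)⁻¹) x :=
      (hasDerivAt_inv hx.ne').const_mul (s/r)
    have hfn : (fun y : ℝ => s/(r*y)) = fun y : ℝ => s/r * y⁻¹ := by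
      funext y; rw [div_mul_eq_div_div, div_eq_mul_inv]
    rw [hfn]
    exact hb.hasDerivWithinAt
  have key2 : ∫ x in Ioi (0:ℝ), g (f x)
      = ∫ x in Ioi (0:ℝ), |s/r * -(x^2)⁻¹| * g (f (s/(r*x))) := by
    have := integral_image_eq_integral_abs_deriv_smul measurableSet_Ioi
      hderiv2 hinj2 (fun y => g (f y))
    rw [himg2] at this
    simpa [smul_eq_mul] using this
  have key2' : ∫ x in Ioi (0:ℝ), g (f x) = (1/r) * ∫ x in Ioi (0:ℝ), (s/x^2) * g (f x) := by
    rw [key2, ← integral_const_mul]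
    apply setIntegral_congr_fun measurableSet_Ioi
    intro x hx
    simp only [mem_Ioi] at hx
    dsimp only
    have hfx : f (s/(r*x)) = -(f x) := by
      simp only [hf]
      field_simp
      ring
    have hgneg : g (-(f x)) = g (f x) := by simp [hg]
    rw [hfx, hgneg]
    have habs2 : |s/r * -(x^2)⁻¹| = s/r * (x^2)⁻¹ := by
      rw [abs_mul, abs_neg, abs_of_pos (div_pos hs hr), abs_of_pos (inv_pos.mpr (pow_pos hx 2))]
    rw [habs2]
    field_simp
  set J := ∫ x in Ioi (0:ℝ), g (f x) with hJ
  have e1 : ∫ x in Ioi (0:ℝ), (r + s/x^2) * g (f x)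
      = (∫ x in Ioi (0:ℝ), r * g (f x)) + ∫ x in Ioi (0:ℝ), (s/x^2) * g (f x) := by
    rw [← integral_add h1 h2]
    apply setIntegral_congr_fun measurableSet_Ioi
    intro x hx; ring
  have e2 : ∫ x in Ioi (0:ℝ), r * g (f x) = r * J := integral_const_mul r _
  have e3 : ∫ x in Ioi (0:ℝ), (s/x^2) * g (f x) = r * J := by
    rw [key2']
    field_simp
  have final : Real.sqrt π = r * J + r * J := by
    have h0 : ∫ x in Ioi (0:ℝ), |r + s/x^2| * g (f x)
        = ∫ x in Ioi (0:ℝ), (r + s/x^2) * g (f x) :=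
      setIntegral_congr_fun measurableSet_Ioi habs
    rw [← hgauss, key, h0, e1, e2, e3]
  have : J = Real.sqrt π / (2*r) := by
    field_simp
    linarith
  exact this


/-- Gaussian scale mixture with exponential mixing gives Laplace. -/
lemma laplace_mixture {l σ : ℝ} (hl : 0 < l) (hσ : 0 < σ) (c : ℝ) :
    ∫ t in Ioi (0:ℝ), t ^ (-(1:ℝ)/2) * Real.exp (-(c^2/t)/(2*σ^2)) * Real.exp (-(l^2*t)/2)
      = Real.sqrt (2*π)/l * Real.exp (-(l/σ) * |c|) := by
  have h2 : Real.sqrt 2 ^ 2 = 2 := Real.sq_sqrt (by norm_num)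
  have h2pos : (0:ℝ) < Real.sqrt 2 := Real.sqrt_pos.mpr (by norm_num)
  have hsqrt2pi : Real.sqrt (2*π) = Real.sqrt 2 * Real.sqrt π := Real.sqrt_mul (by norm_num) π
  by_cases hc : c = 0
  · subst hc
    have e0 : ∀ t ∈ Ioi (0:ℝ), t ^ (-(1:ℝ)/2) * Real.exp (-((0:ℝ)^2/t)/(2*σ^2))
        * Real.exp (-(l^2*t)/2) = t ^ (-(1:ℝ)/2) * Real.exp (-(l^2/2) * t ^ (1:ℝ)) := by
      intro t ht
      simp only [mem_Ioi] at ht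
      rw [Real.rpow_one]
      have h0 : -((0:ℝ)^2/t)/(2*σ^2) = 0 := by simp
      rw [h0, Real.exp_zero, mul_one]
      congr 1
      ring
    rw [setIntegral_congr_fun measurableSet_Ioi e0,
      integral_rpow_mul_exp_neg_mul_rpow one_pos (by norm_num) (by positivity : (0:ℝ) < l^2/2)]
    have hexp0 : (-(-(1:ℝ)/2+1)/1 : ℝ) = -((1:ℝ)/2) := by norm_num
    have hexp1 : ((-(1:ℝ)/2+1)/1 : ℝ) = (1/2 : ℝ) := by norm_num
    rw [hexp0, hexp1, Real.Gamma_one_half_eq]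
    have hb : ((l^2/2 : ℝ)) ^ (-((1:ℝ)/2)) = Real.sqrt 2 / l := by
      rw [Real.rpow_neg (by positivity), ← Real.sqrt_eq_rpow]
      rw [show Real.sqrt (l^2/2) = l / Real.sqrt 2 by
        rw [Real.sqrt_div (sq_nonneg l), Real.sqrt_sq hl.le], inv_div]
    rw [hb, hsqrt2pi]
    simp only [abs_zero, mul_zero, Real.exp_zero, mul_one, one_mul]
    ring
  · set r : ℝ := l / Real.sqrt 2 with hrdef
    set s : ℝ := |c| / (σ * Real.sqrt 2) with hsdef
    have hr : 0 < r := by positivity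
    have hs : 0 < s := by
      have : 0 < |c| := abs_pos.mpr hc
      positivity
    have subst := integral_comp_rpow_Ioi_of_pos
      (g := fun t => t ^ (-(1:ℝ)/2) * Real.exp (-(c^2/t)/(2*σ^2)) * Real.exp (-(l^2*t)/2))
      (p := 2) two_pos
    rw [← subst]
    have e1 : ∀ x ∈ Ioi (0:ℝ),
        ((2:ℝ) * x ^ ((2:ℝ)-1)) • ((x ^ (2:ℝ)) ^ (-(1:ℝ)/2) * Real.exp (-(c^2/(x ^ (2:ℝ)))/(2*σ^2))
          * Real.exp (-(l^2*(x ^ (2:ℝ)))/2))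
        = (2 * Real.exp (-(l/σ) * |c|)) * Real.exp (-(r*x - s/x)^2) := by
      intro x hx
      simp only [mem_Ioi] at hx
      have hx2 : x ^ (2:ℝ) = x^2 := by
        rw [← Real.rpow_natCast x 2]; norm_num
      have hx1 : x ^ ((2:ℝ)-1) = x := by norm_num
      have hxinv : (x ^ (2:ℝ)) ^ (-(1:ℝ)/2) = x⁻¹ := by
        rw [← Real.rpow_mul hx.le]
        norm_num
        rw [Real.rpow_neg_one]
      rw [hx1, hxinv, hx2, smul_eq_mul]
      have hexp : Real.exp (-(c^2/x^2)/(2*σ^2)) * Real.exp (-(l^2*x^2)/2)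
          = Real.exp (-(l/σ) * |c|) * Real.exp (-(r*x - s/x)^2) := by
        rw [← Real.exp_add, ← Real.exp_add]
        congr 1
        have hc2 : |c|^2 = c^2 := sq_abs c
        have hr2 : r^2 = l^2/2 := by rw [hrdef, div_pow, h2]
        have hs2 : s^2 = c^2/(2*σ^2) := by
          rw [hsdef, div_pow, mul_pow, h2, hc2]; ring_nf
        have hrs : r*s = l*|c|/(2*σ) := by
          rw [hrdef, hsdef]
          rw [div_mul_div_comm, show Real.sqrt 2 * (σ * Real.sqrt 2) = 2*σ by nlinarith [h2]]
        have hexpand : (r*x - s/x)^2 = r^2*x^2 - 2*(r*s) + s^2/x^2 := by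
          field_simp
          ring
        rw [hexpand, hr2, hs2, hrs]
        field_simp
        ring
      calc 2 * x * (x⁻¹ * Real.exp (-(c^2/x^2)/(2*σ^2)) * Real.exp (-(l^2*x^2)/2))
          = 2 * (x * x⁻¹) * (Real.exp (-(c^2/x^2)/(2*σ^2)) * Real.exp (-(l^2*x^2)/2)) := by ring
        _ = 2 * (Real.exp (-(l/σ) * |c|) * Real.exp (-(r*x - s/x)^2)) := by
            rw [mul_inv_cancel₀ hx.ne', hexp]; ring
        _ = (2 * Real.exp (-(l/σ) * |c|)) * Real.exp (-(r*x - s/x)^2) := by ring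
    rw [setIntegral_congr_fun measurableSet_Ioi e1, integral_const_mul, glasser hr hs]
    rw [hrdef, hsqrt2pi]
    field_simp

end Aux

/-- The fused lasso precision matrix `Σ⁻¹_{τ,w}`: the symmetric tridiagonal `p×p` matrix
with diagonal entries `1/τ₁ + 1/w₁` at `(0,0)`, `1/τᵢ + 1/w_{i−1} + 1/wᵢ` at interior
`(i,i)`, `1/τ_p + 1/w_{p−1}` at `(p−1,p−1)`, and entries `−1/wᵢ` at `(i,i+1)` and
`(i+1,i)`.  (Here `τ i` plays the role of `τ²_{i+1}` and `w i` of `w²_{i+1}`.) -/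
noncomputable def fusedPrec (p : ℕ) (τ : Fin p → ℝ) (w : Fin (p - 1) → ℝ) :
    Matrix (Fin p) (Fin p) ℝ := fun i j =>
  if i = j then
    (τ i)⁻¹
      + (if h : (i : ℕ) < p - 1 then (w ⟨i, h⟩)⁻¹ else 0)
      + (if h : 0 < (i : ℕ) ∧ (i : ℕ) - 1 < p - 1 then (w ⟨(i : ℕ) - 1, h.2⟩)⁻¹ else 0)
  else if h : (j : ℕ) = (i : ℕ) + 1 ∧ (i : ℕ) < p - 1 then -(w ⟨i, h.2⟩)⁻¹
  else if h : (i : ℕ) = (j : ℕ) + 1 ∧ (j : ℕ) < p - 1 then -(w ⟨j, h.2⟩)⁻¹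
  else 0

section Mat
open Set

variable {p : ℕ}

lemma fusedPrec_entry_eq (τ : Fin p → ℝ) (w : Fin (p - 1) → ℝ) (β : Fin p → ℝ) (hp : 2 ≤ p) (i k : Fin p) :
    fusedPrec p τ w i k * β k =
      (if k = i then ((τ i)⁻¹
        + (if h : (i : ℕ) < p - 1 then (w ⟨i, h⟩)⁻¹ else 0)
        + (if h : 0 < (i : ℕ) ∧ (i : ℕ) - 1 < p - 1 then (w ⟨(i : ℕ) - 1, h.2⟩)⁻¹ else 0)) * β i
       else 0)
      + (if h : (i : ℕ) < p - 1 then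
          (if k = (⟨(i : ℕ)+1, by omega⟩ : Fin p) then -(w ⟨i, h⟩)⁻¹ * β k else 0) else 0)
      + (if h : 0 < (i : ℕ) ∧ (i : ℕ) - 1 < p - 1 then
          (if k = (⟨(i : ℕ)-1, by omega⟩ : Fin p) then -(w ⟨(i : ℕ)-1, h.2⟩)⁻¹ * β k else 0)
         else 0) := by
  unfold fusedPrec
  simp only [Fin.ext_iff]
  split_ifs <;>
    first
      | (exfalso; omega)
      | ring1
      | (have hki : k = i := Fin.ext (by omega); subst hki; ring1)
      | (simp only [show ((k:ℕ)) = (i:ℕ)-1 from by omega]; ring1)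
      | (simp only [show ((k:ℕ)) = (i:ℕ)+1 from by omega]; ring1)


lemma sum_dite_lt (F : Fin (p-1) → ℝ) :
    ∑ i : Fin p, (if h : (i:ℕ) < p - 1 then F ⟨i, h⟩ else 0) = ∑ j : Fin (p-1), F j := by
  set f : ℕ → ℝ := fun n => if h : n < p - 1 then F ⟨n, h⟩ else 0 with hf
  have l1 : ∑ i : Fin p, (if h : (i:ℕ) < p - 1 then F ⟨i, h⟩ else 0)
      = ∑ n ∈ Finset.range p, f n := Fin.sum_univ_eq_sum_range f p
  have l2 : ∑ j : Fin (p-1), F j = ∑ n ∈ Finset.range (p-1), f n := by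
    rw [← Fin.sum_univ_eq_sum_range f (p-1)]
    refine Finset.sum_congr rfl fun j _ => ?_
    rw [hf]
    simp only [dif_pos j.isLt, Fin.eta]
  rw [l1, l2]
  refine (Finset.sum_subset (Finset.range_subset_range.mpr (by omega)) fun n hn hnot => ?_).symm
  rw [hf]
  refine dif_neg ?_
  simp only [Finset.mem_range] at hn hnot
  omega

lemma sum_dite_pred (hp : 2 ≤ p) (F : Fin (p-1) → ℝ) :
    ∑ i : Fin p, (if h : 0 < (i:ℕ) ∧ (i:ℕ) - 1 < p - 1 then F ⟨(i:ℕ)-1, h.2⟩ else 0)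
      = ∑ j : Fin (p-1), F j := by
  set f : ℕ → ℝ := fun n => if h : 0 < n ∧ n - 1 < p - 1 then F ⟨n-1, h.2⟩ else 0 with hf
  have l1 : ∑ i : Fin p, (if h : 0 < (i:ℕ) ∧ (i:ℕ) - 1 < p - 1 then F ⟨(i:ℕ)-1, h.2⟩ else 0)
      = ∑ n ∈ Finset.range p, f n := Fin.sum_univ_eq_sum_range f p
  have hr : Finset.range p = Finset.range ((p-1)+1) := by rw [Nat.sub_add_cancel (by omega)]
  rw [l1, hr, Finset.sum_range_succ']
  have hf0 : f 0 = 0 := by rw [hf]; exact dif_neg (by omega)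
  rw [hf0, add_zero]
  rw [← Fin.sum_univ_eq_sum_range (fun n => f (n+1)) (p-1)]
  refine Finset.sum_congr rfl fun j _ => ?_
  have hj := j.isLt
  rw [hf]
  simp only
  rw [dif_pos (by omega : 0 < (j:ℕ)+1 ∧ (j:ℕ)+1-1 < p-1)]
  congr 1

lemma fusedPrec_mulVec (τ : Fin p → ℝ) (w : Fin (p - 1) → ℝ) (β : Fin p → ℝ) (hp : 2 ≤ p) (i : Fin p) :
    (fusedPrec p τ w *ᵥ β) i = (τ i)⁻¹ * β i
      + (if h : (i:ℕ) < p - 1 then (w ⟨i, h⟩)⁻¹ * (β i - β ⟨(i:ℕ)+1, by omega⟩) else 0)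
      + (if h : 0 < (i:ℕ) ∧ (i:ℕ)-1 < p - 1 then
          (w ⟨(i:ℕ)-1, h.2⟩)⁻¹ * (β i - β ⟨(i:ℕ)-1, by omega⟩) else 0) := by
  have h0 : (fusedPrec p τ w *ᵥ β) i = ∑ k, fusedPrec p τ w i k * β k := rfl
  rw [h0, Finset.sum_congr rfl fun k _ => fusedPrec_entry_eq τ w β hp i k,
    Finset.sum_add_distrib, Finset.sum_add_distrib]
  by_cases h1 : (i:ℕ) < p - 1 <;> by_cases h2 : 0 < (i:ℕ) ∧ (i:ℕ)-1 < p - 1 <;>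
    simp [h1, h2, Finset.sum_ite_eq'] <;> ring1

lemma fusedPrec_quadform (τ : Fin p → ℝ) (w : Fin (p - 1) → ℝ) (β : Fin p → ℝ) (hp : 2 ≤ p) :
    β ⬝ᵥ (fusedPrec p τ w *ᵥ β) = ∑ i, (β i)^2 * (τ i)⁻¹
      + ∑ j : Fin (p-1), (β ⟨(j:ℕ)+1, by omega⟩
          - β ⟨(j:ℕ), by omega⟩)^2 * (w j)⁻¹ := by
  rw [dotProduct]
  rw [Finset.sum_congr rfl fun i _ => by rw [fusedPrec_mulVec τ w β hp i]]
  simp_rw [mul_add, mul_dite, mul_zero]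
  rw [Finset.sum_add_distrib, Finset.sum_add_distrib]
  have e0 : ∑ i, β i * ((τ i)⁻¹ * β i) = ∑ i, (β i)^2 * (τ i)⁻¹ :=
    Finset.sum_congr rfl fun i _ => by ring
  set F1 : Fin (p-1) → ℝ := fun j => β ⟨(j:ℕ), by omega⟩ *
    ((w j)⁻¹ * (β ⟨(j:ℕ), by omega⟩ - β ⟨(j:ℕ)+1, by omega⟩))
    with hF1
  set F2 : Fin (p-1) → ℝ := fun j => β ⟨(j:ℕ)+1, by omega⟩ *
    ((w j)⁻¹ * (β ⟨(j:ℕ)+1, by omega⟩ - β ⟨(j:ℕ), by omega⟩))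
    with hF2
  have e1 : ∑ i : Fin p, (if h : (i:ℕ) < p - 1 then
        β i * ((w ⟨i, h⟩)⁻¹ * (β i - β ⟨(i:ℕ)+1, by omega⟩)) else 0)
      = ∑ j : Fin (p-1), F1 j := by
    rw [← sum_dite_lt F1]
  have e2 : ∑ i : Fin p, (if h : 0 < (i:ℕ) ∧ (i:ℕ)-1 < p - 1 then
        β i * ((w ⟨(i:ℕ)-1, h.2⟩)⁻¹ * (β i - β ⟨(i:ℕ)-1, by omega⟩)) else 0)
      = ∑ j : Fin (p-1), F2 j := by
    rw [← sum_dite_pred hp F2]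
    refine Finset.sum_congr rfl fun i _ => ?_
    refine dite_congr rfl (fun h => ?_) (fun h => rfl)
    rw [hF2]
    simp only
    have hi : (⟨(i:ℕ)-1+1, by have := i.isLt; omega⟩ : Fin p) = i := Fin.ext (by simp; omega)
    try rw [hi]
  rw [e0, e1, e2, add_assoc, ← Finset.sum_add_distrib]
  congr 1
  refine Finset.sum_congr rfl fun j _ => ?_
  rw [hF1, hF2]
  simp only
  ring

lemma fusedPrec_isHermitian (τ : Fin p → ℝ) (w : Fin (p - 1) → ℝ) :
    (fusedPrec p τ w).IsHermitian := by
  ext i k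
  simp only [conjTranspose_apply, star_trivial]
  unfold fusedPrec
  simp only [Fin.ext_iff]
  split_ifs <;>
    first
      | rfl
      | (exfalso; omega)
      | (have hk : k = i := Fin.ext (by omega); subst hk; rfl)

lemma fusedPrec_posDef (τ : Fin p → ℝ) (w : Fin (p - 1) → ℝ) (hp : 2 ≤ p)
    (hτ : ∀ i, 0 < τ i) (hw : ∀ j, 0 < w j) : (fusedPrec p τ w).PosDef := by
  refine posDef_iff_dotProduct_mulVec.mpr ⟨fusedPrec_isHermitian τ w, fun x hx => ?_⟩
  simp only [star_trivial]
  rw [fusedPrec_quadform τ w x hp]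
  obtain ⟨i, hi⟩ := Function.ne_iff.mp hx
  have h1 : 0 < ∑ i, (x i)^2 * (τ i)⁻¹ := by
    refine Finset.sum_pos' (fun j _ => mul_nonneg (sq_nonneg _) (inv_nonneg.mpr (hτ j).le))
      ⟨i, Finset.mem_univ i, ?_⟩
    exact mul_pos (pow_pos (abs_pos.mpr hi) 2 |>.trans_eq (by rw [sq_abs])) (inv_pos.mpr (hτ i))
  have h2 : 0 ≤ ∑ j : Fin (p-1), (x ⟨(j:ℕ)+1, by omega⟩
      - x ⟨(j:ℕ), by omega⟩)^2 * (w j)⁻¹ := by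
    exact Finset.sum_nonneg fun j _ => mul_nonneg (sq_nonneg _) (inv_nonneg.mpr (hw j).le)
  linarith

lemma fusedPrec_det_pos (τ : Fin p → ℝ) (w : Fin (p - 1) → ℝ) (hp : 2 ≤ p)
    (hτ : ∀ i, 0 < τ i) (hw : ∀ j, 0 < w j) : 0 < (fusedPrec p τ w).det :=
  (fusedPrec_posDef τ w hp hτ hw).det_pos

end Mat

/-- integrating the `N_p(0, σ²Σ_{τ,w})` density of `β` against the
(unnormalized) fused lasso prior density of `(τ², w²)` yields
`(2πσ²)^{−p/2} (√(2π)/λ₁)^p (√(2π)/λ₂)^{p−1}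
exp(−(λ₁/σ)∑|βᵢ| − (λ₂/σ)∑|β_{i+1} − βᵢ|)`; consequently the marginal prior of `β`
given `σ²` is proportional to the fused lasso Laplace prior. -/
theorem fusedLasso_marginal_prior (p : ℕ) (hp : 2 ≤ p) (l1 l2 σ : ℝ)
    (h1 : 0 < l1) (h2 : 0 < l2) (hσ : 0 < σ) (β : Fin p → ℝ) :
    ∫ tw : (Fin p → ℝ) × (Fin (p - 1) → ℝ) in
        {tw | (∀ i, 0 < tw.1 i) ∧ (∀ i, 0 < tw.2 i)},
      (2 * π * σ ^ 2) ^ (-(p : ℝ) / 2) * (fusedPrec p tw.1 tw.2).det ^ ((1 : ℝ) / 2)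
        * Real.exp (-(β ⬝ᵥ ((fusedPrec p tw.1 tw.2) *ᵥ β)) / (2 * σ ^ 2))
        * (fusedPrec p tw.1 tw.2).det ^ (-(1 : ℝ) / 2)
        * (∏ i, (tw.1 i) ^ (-(1 : ℝ) / 2) * Real.exp (-(l1 ^ 2 * tw.1 i) / 2))
        * (∏ i, (tw.2 i) ^ (-(1 : ℝ) / 2) * Real.exp (-(l2 ^ 2 * tw.2 i) / 2))
      = (2 * π * σ ^ 2) ^ (-(p : ℝ) / 2)
          * (Real.sqrt (2 * π) / l1) ^ p * (Real.sqrt (2 * π) / l2) ^ (p - 1)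
          * Real.exp (-(l1 / σ) * ∑ i, |β i|
              - (l2 / σ) * ∑ i : Fin (p - 1),
                  |β ⟨(i : ℕ) + 1, by have := i.isLt; omega⟩
                    - β ⟨(i : ℕ), by have := i.isLt; omega⟩|) := by

  set C : ℝ := (2 * π * σ ^ 2) ^ (-(p : ℝ) / 2) with hC
  set Dβ : Fin (p-1) → ℝ := fun j => β ⟨(j:ℕ)+1, by have := j.isLt; omega⟩
    - β ⟨(j:ℕ), by have := j.isLt; omega⟩ with hDβ
  set F : Fin p → ℝ → ℝ := fun i t =>
    t ^ (-(1:ℝ)/2) * Real.exp (-((β i)^2/t)/(2*σ^2)) * Real.exp (-(l1^2*t)/2) with hF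
  set G : Fin (p-1) → ℝ → ℝ := fun j u =>
    u ^ (-(1:ℝ)/2) * Real.exp (-((Dβ j)^2/u)/(2*σ^2)) * Real.exp (-(l2^2*u)/2) with hG
  set S₁ : Set (Fin p → ℝ) := {x | ∀ i, 0 < x i} with hS₁
  set S₂ : Set (Fin (p-1) → ℝ) := {x | ∀ i, 0 < x i} with hS₂
  have hS₁pi : S₁ = Set.pi Set.univ (fun _ : Fin p => Set.Ioi (0:ℝ)) := by
    ext x; simp [hS₁, Set.mem_pi]
  have hS₂pi : S₂ = Set.pi Set.univ (fun _ : Fin (p-1) => Set.Ioi (0:ℝ)) := by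
    ext x; simp [hS₂, Set.mem_pi]
  have hS₁m : MeasurableSet S₁ := by
    rw [hS₁pi]; exact MeasurableSet.univ_pi fun _ => measurableSet_Ioi
  have hS₂m : MeasurableSet S₂ := by
    rw [hS₂pi]; exact MeasurableSet.univ_pi fun _ => measurableSet_Ioi
  have hTprod : {tw : (Fin p → ℝ) × (Fin (p - 1) → ℝ) |
      (∀ i, 0 < tw.1 i) ∧ (∀ i, 0 < tw.2 i)} = S₁ ×ˢ S₂ := rfl
  -- pointwise identity on the set
  have hEq : ∀ tw ∈ S₁ ×ˢ S₂,
      C * (fusedPrec p tw.1 tw.2).det ^ ((1 : ℝ) / 2)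
        * Real.exp (-(β ⬝ᵥ ((fusedPrec p tw.1 tw.2) *ᵥ β)) / (2 * σ ^ 2))
        * (fusedPrec p tw.1 tw.2).det ^ (-(1 : ℝ) / 2)
        * (∏ i, (tw.1 i) ^ (-(1 : ℝ) / 2) * Real.exp (-(l1 ^ 2 * tw.1 i) / 2))
        * (∏ i, (tw.2 i) ^ (-(1 : ℝ) / 2) * Real.exp (-(l2 ^ 2 * tw.2 i) / 2))
      = (C * ∏ i, F i (tw.1 i)) * (∏ j, G j (tw.2 j)) := by
    rintro ⟨t, u⟩ ⟨ht, hu⟩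
    simp only at ht hu ⊢
    have hdet : 0 < (fusedPrec p t u).det := fusedPrec_det_pos t u hp ht hu
    have hcancel : (fusedPrec p t u).det ^ ((1:ℝ)/2) * (fusedPrec p t u).det ^ (-(1:ℝ)/2)
        = 1 := by
      rw [← Real.rpow_add hdet]; norm_num
    have hquad := fusedPrec_quadform t u β hp
    have hsplit : Real.exp (-(β ⬝ᵥ ((fusedPrec p t u) *ᵥ β)) / (2 * σ ^ 2))
        = (∏ i, Real.exp (-((β i)^2/(t i))/(2*σ^2)))
          * ∏ j, Real.exp (-((Dβ j)^2/(u j))/(2*σ^2)) := by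
      rw [hquad, ← Real.exp_sum, ← Real.exp_sum, ← Real.exp_add]
      congr 1
      rw [neg_add, add_div]
      congr 1
      · rw [← Finset.sum_neg_distrib, Finset.sum_div]
        exact Finset.sum_congr rfl fun i _ => by rw [div_eq_mul_inv]; ring
      · rw [← Finset.sum_neg_distrib, Finset.sum_div]
        exact Finset.sum_congr rfl fun j _ => by rw [div_eq_mul_inv]; ring
    calc C * (fusedPrec p t u).det ^ ((1 : ℝ) / 2)
        * Real.exp (-(β ⬝ᵥ ((fusedPrec p t u) *ᵥ β)) / (2 * σ ^ 2))
        * (fusedPrec p t u).det ^ (-(1 : ℝ) / 2)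
        * (∏ i, (t i) ^ (-(1 : ℝ) / 2) * Real.exp (-(l1 ^ 2 * t i) / 2))
        * (∏ i, (u i) ^ (-(1 : ℝ) / 2) * Real.exp (-(l2 ^ 2 * u i) / 2))
        = C * ((fusedPrec p t u).det ^ ((1:ℝ)/2) * (fusedPrec p t u).det ^ (-(1:ℝ)/2))
          * Real.exp (-(β ⬝ᵥ ((fusedPrec p t u) *ᵥ β)) / (2 * σ ^ 2))
          * (∏ i, (t i) ^ (-(1 : ℝ) / 2) * Real.exp (-(l1 ^ 2 * t i) / 2))
          * (∏ i, (u i) ^ (-(1 : ℝ) / 2) * Real.exp (-(l2 ^ 2 * u i) / 2)) := by ring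
      _ = C * ((∏ i, Real.exp (-((β i)^2/(t i))/(2*σ^2)))
            * ∏ j, Real.exp (-((Dβ j)^2/(u j))/(2*σ^2)))
          * (∏ i, (t i) ^ (-(1 : ℝ) / 2) * Real.exp (-(l1 ^ 2 * t i) / 2))
          * (∏ i, (u i) ^ (-(1 : ℝ) / 2) * Real.exp (-(l2 ^ 2 * u i) / 2)) := by
            rw [hcancel, hsplit]; ring
      _ = (C * ∏ i, F i (t i)) * (∏ j, G j (u j)) := by
            rw [hF, hG]
            simp only [Finset.prod_mul_distrib]
            ring
  rw [hTprod, setIntegral_congr_fun (hS₁m.prod hS₂m) hEq]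
  rw [MeasureTheory.Measure.volume_eq_prod, setIntegral_prod_mul
    (fun t => C * ∏ i, F i (t i)) (fun u => ∏ j, G j (u j)) S₁ S₂]
  rw [MeasureTheory.integral_const_mul]
  -- the tau-integral
  have hind : ∀ (n : ℕ) (H : Fin n → ℝ → ℝ) (S : Set (Fin n → ℝ)),
      S = {x | ∀ i, 0 < x i} → MeasurableSet S →
      ∫ x in S, ∏ i, H i (x i) = ∏ i, ∫ t in Set.Ioi (0:ℝ), H i t := by
    intro n H S hSdef hSm
    rw [← MeasureTheory.integral_indicator hSm]
    have hswap : S.indicator (fun x => ∏ i, H i (x i))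
        = fun x => ∏ i, (Set.Ioi (0:ℝ)).indicator (H i) (x i) := by
      funext x
      by_cases hx : x ∈ S
      · rw [Set.indicator_of_mem hx]
        refine (Finset.prod_congr rfl fun i _ => ?_).symm
        have : x i ∈ Set.Ioi (0:ℝ) := by
          rw [hSdef] at hx; exact hx i
        rw [Set.indicator_of_mem this]
      · rw [Set.indicator_of_notMem hx]
        have : ∃ i, ¬ (0 < x i) := by
          by_contra hcon
          push_neg at hcon
          exact hx (by rw [hSdef]; exact fun i => hcon i)
        obtain ⟨i0, hi0⟩ := this
        refine (Finset.prod_eq_zero (Finset.mem_univ i0) ?_).symm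
        rw [Set.indicator_of_notMem (by simpa using hi0)]
    rw [hswap, MeasureTheory.integral_fintype_prod_volume_eq_prod
      (fun i => (Set.Ioi (0:ℝ)).indicator (H i))]
    exact Finset.prod_congr rfl fun i _ =>
      MeasureTheory.integral_indicator measurableSet_Ioi
  rw [hind p F S₁ hS₁ hS₁m, hind (p-1) G S₂ hS₂ hS₂m]
  have hFval : ∀ i, ∫ t in Set.Ioi (0:ℝ), F i t
      = Real.sqrt (2*π)/l1 * Real.exp (-(l1/σ) * |β i|) := fun i =>
    laplace_mixture h1 hσ (β i)
  have hGval : ∀ j, ∫ t in Set.Ioi (0:ℝ), G j t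
      = Real.sqrt (2*π)/l2 * Real.exp (-(l2/σ) * |Dβ j|) := fun j =>
    laplace_mixture h2 hσ (Dβ j)
  rw [Finset.prod_congr rfl fun i _ => hFval i, Finset.prod_congr rfl fun j _ => hGval j]
  rw [Finset.prod_mul_distrib, Finset.prod_mul_distrib, Finset.prod_const, Finset.prod_const,
    ← Real.exp_sum, ← Real.exp_sum]
  simp only [Finset.card_univ, Fintype.card_fin]
  rw [show (∑ i, -(l1/σ) * |β i|) = -(l1/σ) * ∑ i, |β i| from (Finset.mul_sum _ _ _).symm]
  rw [show (∑ j, -(l2/σ) * |Dβ j|) = -(l2/σ) * ∑ j, |Dβ j| from (Finset.mul_sum _ _ _).symm]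
  have htarget : (∑ i : Fin (p-1), |β ⟨(i:ℕ)+1, by have := i.isLt; omega⟩
      - β ⟨(i:ℕ), by have := i.isLt; omega⟩|) = ∑ j, |Dβ j| :=
    Finset.sum_congr rfl fun j _ => rfl
  rw [htarget, Real.exp_sub]
  simp only [neg_mul]
  simp only [Real.exp_neg]
  ring
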